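/- For any two points p₁=(ζ₁,v₁) and p₂=(ζ₂,v₂) of the quaternionic Heisenberg group 𝓗, the Cygan distance satisfies ρ₀(p₁,p₂)² ≤ ((|ζ₁|²+|ζ₂|²)² + |v₁−v₂|²)^{1/2} + 2|ζ₁|·|ζ₂|. -/

import Mathlib

open Quaternion Real

noncomputable section

/-- The Cygan distance on the quaternionic Heisenberg group `𝓗 = ℍ × Im ℍ`:
`ρ₀((ζ₁,v₁),(ζ₂,v₂)) = | |ζ₁−ζ₂|² + v₁−v₂−2·Im(ζ̄₂ζ₁) |^{1/2}`, the outer `|·|`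
being the quaternionic norm. -/
def cygan (ζ₁ v₁ ζ₂ v₂ : ℍ) : ℝ :=
  Real.sqrt ‖((‖ζ₁ - ζ₂‖ ^ 2 : ℝ) : ℍ) + v₁ - v₂ - 2 * (star ζ₂ * ζ₁).im‖

/-- The basic estimate for the Cygan distance:
`ρ₀(p₁,p₂)² ≤ ((|ζ₁|²+|ζ₂|²)² + |v₁−v₂|²)^{1/2} + 2|ζ₁||ζ₂|`. -/
theorem cygan_sq_le
    (ζ₁ v₁ ζ₂ v₂ : ℍ) (hv₁ : v₁.re = 0) (hv₂ : v₂.re = 0) :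
    cygan ζ₁ v₁ ζ₂ v₂ ^ 2 ≤
      Real.sqrt ((‖ζ₁‖ ^ 2 + ‖ζ₂‖ ^ 2) ^ 2 + ‖v₁ - v₂‖ ^ 2) + 2 * ‖ζ₁‖ * ‖ζ₂‖ := by
  rw [cygan, Real.sq_sqrt (norm_nonneg _)]
  set p := star ζ₂ * ζ₁ with hp
  set w := v₁ - v₂ with hw
  have hre : ‖ζ₁ - ζ₂‖ ^ 2 = ‖ζ₁‖ ^ 2 + ‖ζ₂‖ ^ 2 - 2 * p.re := by
    simp only [sq, ← normSq_eq_norm_mul_self, normSq_def', hp, re_mul, re_star, imI_star,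
      imJ_star, imK_star, re_sub, imI_sub, imJ_sub, imK_sub]
    ring
  have him : p.im = p - ((p.re : ℝ) : ℍ) := by
    rw [eq_sub_iff_add_eq, add_comm, re_add_im]
  have h2c : ((2 : ℝ) : ℍ) = 2 := by
    rw [show (2 : ℝ) = 1 + 1 by norm_num, Quaternion.coe_add, Quaternion.coe_one]
    norm_num
  have hX : ((‖ζ₁ - ζ₂‖ ^ 2 : ℝ) : ℍ) + v₁ - v₂ - 2 * p.im
      = ((‖ζ₁‖ ^ 2 + ‖ζ₂‖ ^ 2 : ℝ) : ℍ) + w - 2 * p := by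
    rw [him, hre, hw]
    push_cast
    rw [h2c]
    noncomm_ring
  rw [hX]
  have h1 : ‖((‖ζ₁‖ ^ 2 + ‖ζ₂‖ ^ 2 : ℝ) : ℍ) + w - 2 * p‖
      ≤ ‖((‖ζ₁‖ ^ 2 + ‖ζ₂‖ ^ 2 : ℝ) : ℍ) + w‖ + ‖(2 : ℍ) * p‖ := norm_sub_le _ _
  have h2 : ‖(2 : ℍ) * p‖ = 2 * ‖ζ₁‖ * ‖ζ₂‖ := by
    have h2n : ‖(2 : ℍ)‖ = 2 := by
      rw [show (2 : ℍ) = ((2 : ℝ) : ℍ) by rw [h2c], Quaternion.norm_coe]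
      norm_num
    rw [norm_mul, hp, norm_mul, Quaternion.norm_star, h2n]
    ring
  have hwre : w.re = 0 := by rw [hw, re_sub, hv₁, hv₂, sub_zero]
  have h3 : ‖((‖ζ₁‖ ^ 2 + ‖ζ₂‖ ^ 2 : ℝ) : ℍ) + w‖
      = Real.sqrt ((‖ζ₁‖ ^ 2 + ‖ζ₂‖ ^ 2) ^ 2 + ‖w‖ ^ 2) := by
    rw [← Real.sqrt_sq (norm_nonneg (((‖ζ₁‖ ^ 2 + ‖ζ₂‖ ^ 2 : ℝ) : ℍ) + w))]
    congr 1
    simp only [sq, ← normSq_eq_norm_mul_self, normSq_def', re_add, imI_add, imJ_add, imK_add,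
      re_coe, imI_coe, imJ_coe, imK_coe, hwre]
    ring
  calc ‖((‖ζ₁‖ ^ 2 + ‖ζ₂‖ ^ 2 : ℝ) : ℍ) + w - 2 * p‖
      ≤ ‖((‖ζ₁‖ ^ 2 + ‖ζ₂‖ ^ 2 : ℝ) : ℍ) + w‖ + ‖(2 : ℍ) * p‖ := h1
    _ = Real.sqrt ((‖ζ₁‖ ^ 2 + ‖ζ₂‖ ^ 2) ^ 2 + ‖w‖ ^ 2) + 2 * ‖ζ₁‖ * ‖ζ₂‖ := by rw [h2, h3]
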